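/- arXiv:1305.6649 — 3 statements merged into one kernel-verified Lean document; each statement's English description precedes it below -/
import Mathlib

section
/- Let X̃ be a compactum whose uniformity has the visibility property with respect to a connected graph Γ with vertex set Γ⁰ dense in X̃. Then every infinite geodesic ray γ: ℕ → Γ⁰ of Γ converges to a point of X̃ (i.e., for every entourage v of X̃ there is n₀ such that the set γ([n₀,∞)) is v-small; equivalently the limit lim_{n→∞} γ(n) exists in X̃). -/
open Filter Topology Set

namespace Paper


/-- A pair of vertices `(a, b)` is `u_e`-small if some geodesic of `Γ` joining `a` and `b`
does not contain the edge `e`. -/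
def USmallPair {V : Type*} (Γ : SimpleGraph V) (e : Sym2 V) (a b : V) : Prop :=
  ∃ w : Γ.Walk a b, w.length = Γ.dist a b ∧ e ∉ w.edges

/-- The (unique compatible) uniformity of the compactum `X` has the visibility property with
respect to the graph `Γ` on the vertex set `V ⊆ X`: for every entourage `u` there is a finite
set `F` of edges such that every pair of vertices which is `u_e`-small for all `e ∈ F`
is `u`-small. -/
def HasVisibility {X : Type*} [UniformSpace X] (V : Set X) (Γ : SimpleGraph V) : Prop :=
  ∀ u ∈ uniformity X, ∃ F : Finset (Sym2 V),
    ∀ a b : V, (∀ e ∈ F, USmallPair Γ e a b) → ((a : X), (b : X)) ∈ u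

/-- An infinite geodesic ray in the graph `Γ`. -/
def IsGeodesicRay {V : Type*} (Γ : SimpleGraph V) (γ : ℕ → V) : Prop :=
  (∀ n : ℕ, Γ.Adj (γ n) (γ (n + 1))) ∧
  ∀ m n : ℕ, m ≤ n → Γ.dist (γ m) (γ n) = n - m

/-- An eventual geodesic: a map `γ : ℤ → V` whose consecutive distinct values are adjacent,
whose set of "moving" moments is an interval of `ℤ` (so each maximal stop is infinite),
and which is geodesic outside its stops. Constant maps are eventual geodesics. -/
def IsEventualGeodesic {V : Type*} (Γ : SimpleGraph V) (γ : ℤ → V) : Prop :=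
  (∀ k : ℤ, γ k ≠ γ (k + 1) → Γ.Adj (γ k) (γ (k + 1))) ∧
  {k : ℤ | γ k ≠ γ (k + 1)}.OrdConnected ∧
  ∀ s t : ℤ, s ≤ t → (∀ k : ℤ, s ≤ k → k < t → γ k ≠ γ (k + 1)) →
    (Γ.dist (γ s) (γ t) : ℤ) = t - s

/-- The set of eventual geodesics `EG(Γ)` regarded as a subset of the product space `X^ℤ`. -/
def EGImage {X : Type*} [UniformSpace X] (V : Set X) (Γ : SimpleGraph V) : Set (ℤ → X) :=
  {f | ∃ γ : ℤ → V, IsEventualGeodesic Γ γ ∧ f = fun t => (γ t : X)}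



/-- The walk along a ray from index `m`, of length `d`. -/
def rayWalk {V : Type*} {Γ : SimpleGraph V} {γ : ℕ → V}
    (hadj : ∀ n : ℕ, Γ.Adj (γ n) (γ (n + 1))) : ∀ (m d : ℕ), Γ.Walk (γ m) (γ (m + d))
  | m, 0 => SimpleGraph.Walk.nil
  | m, d + 1 =>
    (SimpleGraph.Walk.cons (hadj m) (rayWalk hadj (m + 1) d)).copy rfl
      (congrArg γ (by omega))

theorem rayWalk_length {V : Type*} {Γ : SimpleGraph V} {γ : ℕ → V}
    (hadj : ∀ n : ℕ, Γ.Adj (γ n) (γ (n + 1))) (m d : ℕ) :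
    (rayWalk hadj m d).length = d := by
  induction d generalizing m with
  | zero => rfl
  | succ d ih =>
    simp [rayWalk, SimpleGraph.Walk.length_copy, ih]

theorem rayWalk_edges {V : Type*} {Γ : SimpleGraph V} {γ : ℕ → V}
    (hadj : ∀ n : ℕ, Γ.Adj (γ n) (γ (n + 1))) (m d : ℕ) {e : Sym2 V}
    (he : e ∈ (rayWalk hadj m d).edges) :
    ∃ k : ℕ, m ≤ k ∧ k < m + d ∧ e = s(γ k, γ (k + 1)) := by
  induction d generalizing m with
  | zero => simp [rayWalk] at he
  | succ d ih =>
    rw [rayWalk, SimpleGraph.Walk.edges_copy, SimpleGraph.Walk.edges_cons] at he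
    rcases List.mem_cons.mp he with h | h
    · exact ⟨m, le_refl m, by omega, h⟩
    · obtain ⟨k, hk1, hk2, hk3⟩ := ih (m + 1) h
      exact ⟨k, by omega, by omega, hk3⟩

/-- Lemma 3.1 / `conv`. Every infinite geodesic ray of `Γ` converges to a
point of `X`. -/
theorem statement_0 {X : Type*} [UniformSpace X] [CompactSpace X] [T2Space X]
    {V : Set X} (hdense : Dense V) (Γ : SimpleGraph V) (hconn : Γ.Connected)
    (hvis : HasVisibility V Γ) (γ : ℕ → V) (hγ : IsGeodesicRay Γ γ) :
    ∃ p : X, Tendsto (fun n : ℕ => (γ n : X)) atTop (nhds p) := by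
  obtain ⟨hadj, hdist⟩ := hγ
  have hinj : Function.Injective γ := by
    intro m n h
    rcases le_total m n with hmn | hmn
    · have := hdist m n hmn
      rw [h, SimpleGraph.dist_self] at this
      omega
    · have := hdist n m hmn
      rw [h, SimpleGraph.dist_self] at this
      omega
  have hφinj : Function.Injective (fun k : ℕ => s(γ k, γ (k + 1))) := by
    intro j k h
    simp only [Sym2.eq, Sym2.rel_iff', Prod.mk.injEq, Prod.swap_prod_mk] at h
    rcases h with ⟨h1, _⟩ | ⟨h1, h2⟩
    · exact hinj h1
    · have := hinj h1
      have := hinj h2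
      omega
  have : CauchySeq (fun n : ℕ => (γ n : X)) := by
    rw [cauchySeq_iff]
    intro u hu
    obtain ⟨v, hv, hvsymm, hvu⟩ := symm_of_uniformity hu
    obtain ⟨F, hF⟩ := hvis v hv
    -- the set of indices whose edge lies in F is finite
    have hfin : {k : ℕ | s(γ k, γ (k + 1)) ∈ F}.Finite := by
      have : {k : ℕ | s(γ k, γ (k + 1)) ∈ F} =
          (fun k : ℕ => s(γ k, γ (k + 1))) ⁻¹' (↑F : Set (Sym2 V)) := rfl
      rw [this]
      exact Set.Finite.preimage hφinj.injOn F.finite_toSet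
    obtain ⟨N, hN⟩ := hfin.bddAbove
    refine ⟨N + 1, ?_⟩
    have key : ∀ m n : ℕ, N + 1 ≤ m → m ≤ n → ∀ e ∈ F, USmallPair Γ e (γ m) (γ n) := by
      intro m n hm hmn e heF
      obtain ⟨d, rfl⟩ : ∃ d, n = m + d := ⟨n - m, by omega⟩
      refine ⟨rayWalk hadj m d, ?_, ?_⟩
      · rw [rayWalk_length, hdist m (m + d) (by omega)]
        omega
      · intro hmem
        obtain ⟨k, hk1, _, hk3⟩ := rayWalk_edges hadj m d hmem
        have : k ∈ {k : ℕ | s(γ k, γ (k + 1)) ∈ F} := by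
          rw [Set.mem_setOf_eq, ← hk3]; exact heF
        have := hN this
        omega
    intro m hm n hn
    rcases le_total m n with hmn | hmn
    · exact hvu (hF (γ m) (γ n) (key m n hm hmn))
    · exact hvu (hvsymm.symm _ _ (hF (γ n) (γ m) (key n m hn hmn)))
  exact cauchySeq_tendsto_of_complete this


end Paper
end

section
/- Let X̃ be a compactum whose uniformity has the visibility property with respect to a connected graph Γ with vertex set Γ⁰ dense in X̃. Then for every n ≥ 0 and every vertex q ∈ Γ⁰, the ball B_n(q) = {p ∈ Γ⁰ : d_Γ(p,q) ≤ n} of radius n in the graph metric of Γ is a closed subset of X̃. -/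
open Filter Topology Set

namespace Paper


/-- Corollary `clbal`. Every ball of the graph metric of `Γ` is closed
in `X`. -/
theorem statement_2 {X : Type*} [UniformSpace X] [CompactSpace X] [T2Space X]
    {V : Set X} (hdense : Dense V) (Γ : SimpleGraph V) (hconn : Γ.Connected)
    (hvis : HasVisibility V Γ) (n : ℕ) (q : V) :
    IsClosed ((fun v : V => (v : X)) '' {p : V | Γ.dist p q ≤ n}) := by
  apply isClosed_of_closure_subset
  intro x hx
  rw [mem_closure_iff_ultrafilter] at hx
  obtain ⟨U, hUmem, hUx⟩ := hx
  set B : Set V := {p : V | Γ.dist p q ≤ n} with hBdef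
  have hinj : Function.Injective (fun v : V => (v : X)) := Subtype.coe_injective
  have hrange : Set.range (fun v : V => (v : X)) ∈ U :=
    mem_of_superset hUmem (image_subset_range _ _)
  set ℱ : Ultrafilter V := U.comap hinj hrange with hFdef
  have hB : B ∈ ℱ := by
    rw [hFdef, Ultrafilter.mem_comap]
    exact hUmem
  have htend : Tendsto (fun p : V => (p : X)) ℱ (𝓝 x) := by
    have h1 : Filter.map (fun v : V => (v : X)) (Filter.comap (fun v : V => (v : X)) U) = U :=
      Filter.map_comap_of_mem hrange
    show Filter.map _ (ℱ : Filter V) ≤ 𝓝 x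
    rw [hFdef]
    exact h1.le.trans hUx
  -- choose geodesic walks
  have hw : ∀ p : V, ∃ w : Γ.Walk p q, w.length = Γ.dist p q :=
    fun p => hconn.exists_walk_length_eq_dist p q
  choose w hwlen using hw
  set a : ℕ → V → V := fun i p => (w p).getVert (i + (w p).length - n) with hadef
  have hstep : ∀ (p : V) (i : ℕ), a i p = a (i + 1) p ∨ Γ.Adj (a i p) (a (i + 1) p) := by
    intro p i
    by_cases h : i + (w p).length < n
    · left
      have h1 : i + (w p).length - n = 0 := by omega
      have h2 : i + 1 + (w p).length - n = 0 := by omega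
      simp [hadef, h1, h2]
    · by_cases h2 : i < n
      · right
        have h3 : i + 1 + (w p).length - n = (i + (w p).length - n) + 1 := by omega
        have h4 : i + (w p).length - n < (w p).length := by omega
        rw [hadef]
        simp only
        rw [h3]
        exact (w p).adj_getVert_succ h4
      · left
        have h3 : (w p).length ≤ i + (w p).length - n := by omega
        have h4 : (w p).length ≤ i + 1 + (w p).length - n := by omega
        simp [hadef, SimpleGraph.Walk.getVert_of_length_le _ h3,
          SimpleGraph.Walk.getVert_of_length_le _ h4]
  have han : ∀ p : V, a n p = q := by
    intro p
    have h1 : n + (w p).length - n = (w p).length := by omega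
    simp [hadef, h1, SimpleGraph.Walk.getVert_length]
  have ha0 : ∀ p ∈ B, a 0 p = p := by
    intro p hp
    have hL : (w p).length ≤ n := by rw [hwlen]; exact hp
    have h1 : (w p).length - n = 0 := by omega
    simp [hadef, h1, SimpleGraph.Walk.getVert_zero]
  -- main induction
  have key : ∀ i : ℕ, i ≤ n → ∃ p' : V, Γ.dist p' q ≤ i ∧
      Tendsto (fun p : V => (a (n - i) p : X)) ℱ (𝓝 (p' : X)) := by
    intro i
    induction i with
    | zero =>
      intro _
      refine ⟨q, by simp, ?_⟩
      have : (fun p : V => (a (n - 0) p : X)) = fun _ : V => (q : X) := by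
        funext p; simp [han p]
      rw [this]
      exact tendsto_const_nhds
    | succ i ih =>
      intro hin
      obtain ⟨p', hp'd, hp't⟩ := ih (by omega)
      set j : ℕ := n - (i + 1) with hjdef
      have hj1 : j + 1 = n - i := by omega
      set g : V → X := fun p => (a j p : X) with hgdef
      obtain ⟨y, -, hy⟩ := isCompact_univ.ultrafilter_le_nhds (Ultrafilter.map g ℱ)
        (by simp)
      have hyt : Tendsto g ℱ (𝓝 y) := hy
      by_cases hcase : y = (p' : X)
      · exact ⟨p', le_trans hp'd (Nat.le_succ i), by rw [← hcase] at *; exact hyt⟩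
      · -- find a closed entourage missing (y, p')
        have hexu : ∃ u ∈ uniformity X, (y, (p' : X)) ∉ u := by
          by_contra h
          push_neg at h
          exact hcase (eq_of_uniformity fun {u} hu => h u hu)
        obtain ⟨u, hu, hyp'u⟩ := hexu
        obtain ⟨u', ⟨hu', hu'closed⟩, hu'sub⟩ := uniformity_hasBasis_closed.mem_iff.mp hu
        have hyp'u' : (y, (p' : X)) ∉ u' := fun h => hyp'u (hu'sub h)
        obtain ⟨F, hF⟩ := hvis u' hu'
        have hp't' : Tendsto (fun p : V => (a (j + 1) p : X)) ℱ (𝓝 (p' : X)) := by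
          rw [hj1]; exact hp't
        have hpair : Tendsto (fun p : V => ((a j p : X), (a (j + 1) p : X))) ℱ
            (𝓝 (y, (p' : X))) := hyt.prodMk_nhds hp't'
        have hev : ∀ᶠ p in (ℱ : Filter V),
            ((a j p : X), (a (j + 1) p : X)) ∉ u' :=
          hpair (hu'closed.isOpen_compl.mem_nhds hyp'u')
        have hedge : ∀ᶠ p in (ℱ : Filter V),
            s(a j p, a (j + 1) p) ∈ (F : Set (Sym2 V)) ∧ Γ.Adj (a j p) (a (j + 1) p) := by
          refine hev.mono fun p hp => ?_
          have hne : a j p ≠ a (j + 1) p := by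
            intro h
            exact hp (by rw [← h]; exact refl_mem_uniformity hu')
          have hadj : Γ.Adj (a j p) (a (j + 1) p) := (hstep p j).resolve_left hne
          refine ⟨?_, hadj⟩
          by_contra hnF
          apply hp
          apply hF
          intro e heF
          refine ⟨SimpleGraph.Walk.cons hadj SimpleGraph.Walk.nil, ?_, ?_⟩
          · simp [SimpleGraph.dist_eq_one_iff_adj.mpr hadj]
          · simp only [SimpleGraph.Walk.edges_cons, SimpleGraph.Walk.edges_nil,
              List.mem_singleton]
            intro h
            exact hnF (h ▸ heF)
        obtain ⟨f, hfF, hpure⟩ := Ultrafilter.eq_pure_of_finite_mem F.finite_toSet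
          (show (F : Set (Sym2 V)) ∈ Ultrafilter.map (fun p => s(a j p, a (j + 1) p)) ℱ from
            hedge.mono fun p hp => hp.1)
        have hconst : ∀ᶠ p in (ℱ : Filter V), s(a j p, a (j + 1) p) = f := by
          have : {f} ∈ Ultrafilter.map (fun p => s(a j p, a (j + 1) p)) ℱ := by
            rw [hpure]
            exact Filter.mem_pure.mpr rfl
          exact this
        induction f using Sym2.ind with
        | _ v₁ v₂ =>
        have hsplit : ∀ᶠ p in (ℱ : Filter V),
            (a j p = v₁ ∧ a (j + 1) p = v₂) ∨ (a j p = v₂ ∧ a (j + 1) p = v₁) := by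
          refine hconst.mono fun p hp => ?_
          exact Sym2.eq_iff.mp hp
        have hor := (Ultrafilter.eventually_or (f := ℱ)).mp hsplit
        -- adjacency of v₁ v₂
        have hadj12 : Γ.Adj v₁ v₂ ∨ Γ.Adj v₂ v₁ := by
          have hne : ∀ᶠ p in (ℱ : Filter V), True := Filter.Eventually.of_forall fun _ => trivial
          rcases hor with hcase1 | hcase1 <;>
          · obtain ⟨p, hp1, hp2⟩ := (hcase1.and (hedge.mono fun p hp => hp.2)).exists
            rw [hp1.1, hp1.2] at hp2
            first | exact Or.inl hp2 | exact Or.inr hp2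
        have hadjvw : Γ.Adj v₁ v₂ := by
          rcases hadj12 with h | h
          · exact h
          · exact h.symm
        rcases hor with hcase1 | hcase1
        · -- a j p = v₁ eventually, a (j+1) p = v₂ eventually
          have ht1 : Tendsto (fun p : V => (a j p : X)) ℱ (𝓝 (v₁ : X)) := by
            apply Tendsto.congr' (f₁ := fun _ : V => (v₁ : X))
            · exact hcase1.mono fun p hp => (congrArg _ hp.1).symm
            · exact tendsto_const_nhds
          have ht2 : Tendsto (fun p : V => (a (j + 1) p : X)) ℱ (𝓝 ((v₂ : V) : X)) := by
            apply Tendsto.congr' (f₁ := fun _ : V => (v₂ : X))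
            · exact hcase1.mono fun p hp => (congrArg _ hp.2).symm
            · exact tendsto_const_nhds
          have hv2p' : (v₂ : X) = (p' : X) := tendsto_nhds_unique ht2 hp't'
          have hv2 : v₂ = p' := hinj hv2p'
          refine ⟨v₁, ?_, ht1⟩
          calc Γ.dist v₁ q ≤ Γ.dist v₁ v₂ + Γ.dist v₂ q := hconn.dist_triangle
            _ ≤ 1 + i := by
                have h1 : Γ.dist v₁ v₂ = 1 := SimpleGraph.dist_eq_one_iff_adj.mpr hadjvw
                have h2 : Γ.dist v₂ q ≤ i := hv2 ▸ hp'd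
                omega
            _ = i + 1 := by omega
        · have ht1 : Tendsto (fun p : V => (a j p : X)) ℱ (𝓝 (v₂ : X)) := by
            apply Tendsto.congr' (f₁ := fun _ : V => (v₂ : X))
            · exact hcase1.mono fun p hp => (congrArg _ hp.1).symm
            · exact tendsto_const_nhds
          have ht2 : Tendsto (fun p : V => (a (j + 1) p : X)) ℱ (𝓝 ((v₁ : V) : X)) := by
            apply Tendsto.congr' (f₁ := fun _ : V => (v₁ : X))
            · exact hcase1.mono fun p hp => (congrArg _ hp.2).symm
            · exact tendsto_const_nhds
          have hv1p' : (v₁ : X) = (p' : X) := tendsto_nhds_unique ht2 hp't'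
          have hv1 : v₁ = p' := hinj hv1p'
          refine ⟨v₂, ?_, ht1⟩
          calc Γ.dist v₂ q ≤ Γ.dist v₂ v₁ + Γ.dist v₁ q := hconn.dist_triangle
            _ ≤ 1 + i := by
                have h1 : Γ.dist v₂ v₁ = 1 := SimpleGraph.dist_eq_one_iff_adj.mpr hadjvw.symm
                have h2 : Γ.dist v₁ q ≤ i := hv1 ▸ hp'd
                omega
            _ = i + 1 := by omega
  obtain ⟨p'', hd, ht⟩ := key n le_rfl
  have h0 : Tendsto (fun p : V => (a 0 p : X)) ℱ (𝓝 (p'' : X)) := by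
    have : n - n = 0 := by omega
    rwa [this] at ht
  have h0' : Tendsto (fun p : V => (p : X)) ℱ (𝓝 (p'' : X)) := by
    apply Tendsto.congr' (f₁ := fun p : V => (a 0 p : X)) _ h0
    exact Filter.eventually_of_mem hB fun p hp => congrArg _ (ha0 p hp)
  have : x = (p'' : X) := tendsto_nhds_unique htend h0'
  exact ⟨p'', hd, this.symm⟩


end Paper
end

section
/- Suppose a group G acts 3-discontinuously and 2-cocompactly on compacta X₁ and X₂, and let Z be a pullback space for these actions, with continuous G-equivariant maps π₁: Z → X₁ and π₂: Z → X₂. Then the induced diagonal action of G on the compact subspace T = {(π₁(z), π₂(z)) : z ∈ Z} of X₁ × X₂ is 3-discontinuous and 2-cocompact. -/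
open Filter Topology Set

namespace Paper


/-- The space of pairs of distinct points of `S`. -/
def theta2 (X : Type*) (S : Set X) : Set (X × X) :=
  {p | p.1 ∈ S ∧ p.2 ∈ S ∧ p.1 ≠ p.2}

/-- The space of triples of pairwise distinct points of `S`. -/
def theta3 (X : Type*) (S : Set X) : Set (X × X × X) :=
  {p | p.1 ∈ S ∧ p.2.1 ∈ S ∧ p.2.2 ∈ S ∧ p.1 ≠ p.2.1 ∧ p.1 ≠ p.2.2 ∧ p.2.1 ≠ p.2.2}

/-- The action of `G` is 3-discontinuous on the invariant subset `S ⊆ X`: the induced action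
on the space of triples of pairwise distinct points of `S` is properly discontinuous. -/
def ThreeDiscontinuousOn (G X : Type*) [Group G] [TopologicalSpace X] [MulAction G X]
    (S : Set X) : Prop :=
  ∀ K L : Set (X × X × X), K ⊆ theta3 X S → L ⊆ theta3 X S → IsCompact K → IsCompact L →
    {g : G | ∃ p ∈ K, (g • p.1, g • p.2.1, g • p.2.2) ∈ L}.Finite

/-- The action of `G` is 2-cocompact on the invariant subset `S ⊆ X`: there is a compact
fundamental set for the induced action on the space of distinct pairs of `S`. -/
def TwoCocompactOn (G X : Type*) [Group G] [TopologicalSpace X] [MulAction G X]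
    (S : Set X) : Prop :=
  ∃ K : Set (X × X), K ⊆ theta2 X S ∧ IsCompact K ∧
    ∀ p ∈ theta2 X S, ∃ g : G, (g • p.1, g • p.2) ∈ K

/-- The limit set of a subgroup `H ≤ G` for the action of `G` on `X`: the set of accumulation
points of an `H`-orbit in `X`. -/
def limitSet (G X : Type*) [Group G] [TopologicalSpace X] [MulAction G X]
    (H : Subgroup G) : Set X :=
  {y | ∃ x : X, MapClusterPt y (Filter.cofinite : Filter H) fun h : H => (h : G) • x}

/-- The action of `G` on `X` is minimal: the limit set is all of `X`. -/
def MinimalAction (G X : Type*) [Group G] [TopologicalSpace X] [MulAction G X] : Prop :=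
  limitSet G X ⊤ = Set.univ

/-- The action of `G` on `X` is parabolic: the limit set is a single point. -/
def ParabolicAction (G X : Type*) [Group G] [TopologicalSpace X] [MulAction G X] : Prop :=
  ∃ p : X, limitSet G X ⊤ = {p}

/-- The subgroup `H ≤ G` acts 2-cocompactly on the subset `Λ ⊆ X`: there is a compact
fundamental set for the `H`-action on the space of distinct pairs of `Λ` (in particular this
holds trivially when `Λ` has at most one point). -/
def SubgroupTwoCocompactOn {G : Type*} (X : Type*) [Group G] [TopologicalSpace X]
    [MulAction G X] (H : Subgroup G) (Λ : Set X) : Prop :=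
  ∃ K : Set (X × X), K ⊆ theta2 X Λ ∧ IsCompact K ∧
    ∀ p ∈ theta2 X Λ, ∃ h : H, ((h : G) • p.1, (h : G) • p.2) ∈ K

/-- `p` is a parabolic point: its stabilizer is infinite and `p` is the unique point
fixed by its stabilizer. -/
def IsParabolicPoint (G : Type*) {X : Type*} [Group G] [MulAction G X] (p : X) : Prop :=
  ((MulAction.stabilizer G p : Set G)).Infinite ∧
    ∀ q : X, (∀ g ∈ MulAction.stabilizer G p, g • q = q) → q = p

/-- The peripheral structure of the action: the set of stabilizers of parabolic points. -/
def peripheralStructure (G X : Type*) [Group G] [MulAction G X] : Set (Subgroup G) :=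
  {P | ∃ p : X, IsParabolicPoint G p ∧ P = MulAction.stabilizer G p}

/-- `x` is a conical point for the action of `G` on `X`. -/
def IsConicalPoint (G : Type*) {X : Type*} [Group G] [TopologicalSpace X] [MulAction G X]
    (x : X) : Prop :=
  ∃ S : Set G, S.Infinite ∧ ∀ y : X, y ≠ x →
    ∀ p ∈ closure {q : X × X | ∃ s ∈ S, q = (s • x, s • y)}, p.1 ≠ p.2

/-- `H ≤ G` is dynamically quasiconvex: for every entourage `u` of `X` the set of cosets
`gH` such that `g(Λ_X H)` is not `u`-small is finite. -/
def DynamicallyQuasiconvex {G : Type*} (X : Type*) [Group G] [UniformSpace X]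
    [MulAction G X] (H : Subgroup G) : Prop :=
  ∀ u ∈ uniformity X,
    ((QuotientGroup.mk : G → G ⧸ H) ''
      {g : G | ¬ ∀ x ∈ limitSet G X H, ∀ y ∈ limitSet G X H, (g • x, g • y) ∈ u}).Finite

/-- An infinite set `S ⊆ G` converges to the cross with repeller `r` and attractor `a`:
for all neighbourhoods `R` of `r` and `A` of `a`, all but finitely many `g ∈ S` satisfy
`g • (X ∖ R) ⊆ A`. -/
def ConvergesToCross (G : Type*) {X : Type*} [Group G] [TopologicalSpace X] [MulAction G X]
    (S : Set G) (r a : X) : Prop :=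
  S.Infinite ∧ ∀ R ∈ nhds r, ∀ A ∈ nhds a,
    {g : G | g ∈ S ∧ ¬ ∀ x : X, x ∉ R → g • x ∈ A}.Finite

/-- `a` is an attractive limit point of `S ⊆ G`: some infinite subset of `S` converges to a
cross with attractor `a`. -/
def IsAttractiveLimitPoint (G : Type*) {X : Type*} [Group G] [TopologicalSpace X]
    [MulAction G X] (S : Set G) (a : X) : Prop :=
  ∃ S₀ ⊆ S, ∃ r : X, ConvergesToCross G S₀ r a

/-- `F` is a closed set of the attractor-sum topology on `X ⊔ G`: its trace on `X` is closed,
its trace on `G` is arbitrary, and it contains every attractive limit point of its trace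
on `G`. -/
def AttractorSumClosed (G X : Type*) [Group G] [TopologicalSpace X] [MulAction G X]
    (F : Set (X ⊕ G)) : Prop :=
  IsClosed (Sum.inl ⁻¹' F : Set X) ∧
    ∀ a : X, IsAttractiveLimitPoint G (Sum.inr ⁻¹' F : Set G) a → Sum.inl a ∈ F


/-- Lemma `quotient`. If `G` acts 3-discontinuously and 2-cocompactly on
compacta `X₁` and `X₂` and `Z` is a pullback space with maps `π₁, π₂`, then the diagonal
action of `G` on the compact subspace `T = {(π₁ z, π₂ z)} ⊆ X₁ × X₂` is 3-discontinuous
and 2-cocompact. -/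
theorem statement_16 {G X₁ X₂ Z : Type*} [Group G]
    [TopologicalSpace X₁] [CompactSpace X₁] [T2Space X₁] [MulAction G X₁]
    [ContinuousConstSMul G X₁]
    [TopologicalSpace X₂] [CompactSpace X₂] [T2Space X₂] [MulAction G X₂]
    [ContinuousConstSMul G X₂]
    [TopologicalSpace Z] [CompactSpace Z] [T2Space Z] [MulAction G Z]
    [ContinuousConstSMul G Z]
    (h13 : ThreeDiscontinuousOn G X₁ Set.univ) (h12 : TwoCocompactOn G X₁ Set.univ)
    (h23 : ThreeDiscontinuousOn G X₂ Set.univ) (h22 : TwoCocompactOn G X₂ Set.univ)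
    (hZ3 : ThreeDiscontinuousOn G Z Set.univ)
    (π₁ : Z → X₁) (π₂ : Z → X₂) (hπ₁ : Continuous π₁) (hπ₂ : Continuous π₂)
    (he₁ : ∀ (g : G) (z : Z), π₁ (g • z) = g • π₁ z)
    (he₂ : ∀ (g : G) (z : Z), π₂ (g • z) = g • π₂ z) :
    IsCompact {p : X₁ × X₂ | ∃ z : Z, p = (π₁ z, π₂ z)} ∧
    ThreeDiscontinuousOn G (X₁ × X₂) {p : X₁ × X₂ | ∃ z : Z, p = (π₁ z, π₂ z)} ∧
    TwoCocompactOn G (X₁ × X₂) {p : X₁ × X₂ | ∃ z : Z, p = (π₁ z, π₂ z)} := by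
  set T : Set (X₁ × X₂) := {p : X₁ × X₂ | ∃ z : Z, p = (π₁ z, π₂ z)} with hTdef
  have hπ : Continuous fun z : Z => (π₁ z, π₂ z) := hπ₁.prodMk hπ₂
  have hTimg : T = (fun z : Z => (π₁ z, π₂ z)) '' Set.univ := by
    ext p; simp [hTdef, eq_comm]
  have hTcomp : IsCompact T := by
    rw [hTimg]; exact isCompact_univ.image hπ
  -- T is G-invariant
  have hTinv : ∀ (g : G) (p : X₁ × X₂), p ∈ T → g • p ∈ T := by
    rintro g p ⟨z, rfl⟩
    exact ⟨g • z, by simp [Prod.smul_def, he₁, he₂]⟩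
  refine ⟨hTcomp, ?_, ?_⟩
  · -- 3-discontinuity
    intro K L hK hL hKc hLc
    set f : Z × Z × Z → (X₁ × X₂) × (X₁ × X₂) × (X₁ × X₂) :=
      fun q => ((π₁ q.1, π₂ q.1), (π₁ q.2.1, π₂ q.2.1), (π₁ q.2.2, π₂ q.2.2)) with hf
    have hfc : Continuous f := by
      apply Continuous.prodMk
      · exact (hπ₁.comp continuous_fst).prodMk (hπ₂.comp continuous_fst)
      · apply Continuous.prodMk
        · exact ((hπ₁.comp continuous_fst).prodMk (hπ₂.comp continuous_fst)).comp
            continuous_snd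
        · exact ((hπ₁.comp continuous_snd).prodMk (hπ₂.comp continuous_snd)).comp
            continuous_snd
    have hsub : ∀ (M : Set ((X₁ × X₂) × (X₁ × X₂) × (X₁ × X₂))),
        M ⊆ theta3 (X₁ × X₂) T → f ⁻¹' M ⊆ theta3 Z Set.univ := by
      intro M hM q hq
      obtain ⟨-, -, -, h1, h2, h3⟩ := hM hq
      exact ⟨trivial, trivial, trivial,
        fun h => h1 (by simp [hf, h]),
        fun h => h2 (by simp [hf, h]),
        fun h => h3 (by simp [hf, h])⟩
    have hcomp : ∀ (M : Set ((X₁ × X₂) × (X₁ × X₂) × (X₁ × X₂))),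
        IsCompact M → IsCompact (f ⁻¹' M) := by
      intro M hM
      exact (hM.isClosed.preimage hfc).isCompact
    have hfin := hZ3 (f ⁻¹' K) (f ⁻¹' L) (hsub K hK) (hsub L hL) (hcomp K hKc) (hcomp L hLc)
    refine hfin.subset ?_
    rintro g ⟨p, hpK, hpL⟩
    obtain ⟨hp1, hp2, hp3, -, -, -⟩ := hK hpK
    obtain ⟨z₁, hz₁⟩ := hp1
    obtain ⟨z₂, hz₂⟩ := hp2
    obtain ⟨z₃, hz₃⟩ := hp3
    refine ⟨(z₁, z₂, z₃), ?_, ?_⟩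
    · show f (z₁, z₂, z₃) ∈ K
      have : f (z₁, z₂, z₃) = p := by
        simp only [hf]
        rw [← hz₁, ← hz₂, ← hz₃]
      rwa [this]
    · show f (g • z₁, g • z₂, g • z₃) ∈ L
      have : f (g • z₁, g • z₂, g • z₃) = (g • p.1, g • p.2.1, g • p.2.2) := by
        simp only [hf, he₁, he₂, hz₁, hz₂, hz₃, Prod.smul_def]
      rwa [this]
  · -- 2-cocompactness
    obtain ⟨K₁, hK₁sub, hK₁c, hK₁f⟩ := h12
    obtain ⟨K₂, hK₂sub, hK₂c, hK₂f⟩ := h22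
    set C₁ : Set ((X₁ × X₂) × (X₁ × X₂)) :=
      (T ×ˢ T) ∩ {q | (q.1.1, q.2.1) ∈ K₁} with hC₁
    set C₂ : Set ((X₁ × X₂) × (X₁ × X₂)) :=
      (T ×ˢ T) ∩ {q | (q.1.2, q.2.2) ∈ K₂} with hC₂
    have hC₁c : IsCompact C₁ := by
      apply (hTcomp.prod hTcomp).inter_right
      exact hK₁c.isClosed.preimage ((continuous_fst.comp continuous_fst).prodMk
        (continuous_fst.comp continuous_snd))
    have hC₂c : IsCompact C₂ := by
      apply (hTcomp.prod hTcomp).inter_right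
      exact hK₂c.isClosed.preimage ((continuous_snd.comp continuous_fst).prodMk
        (continuous_snd.comp continuous_snd))
    refine ⟨C₁ ∪ C₂, ?_, hC₁c.union hC₂c, ?_⟩
    · rintro q (⟨⟨hq1, hq2⟩, hqK⟩ | ⟨⟨hq1, hq2⟩, hqK⟩)
      · obtain ⟨-, -, hne⟩ := hK₁sub hqK
        exact ⟨hq1, hq2, fun h => hne (by rw [h])⟩
      · obtain ⟨-, -, hne⟩ := hK₂sub hqK
        exact ⟨hq1, hq2, fun h => hne (by rw [h])⟩
    · rintro p ⟨hp1, hp2, hpne⟩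
      by_cases hcase : p.1.1 ≠ p.2.1
      · obtain ⟨g, hg⟩ := hK₁f (p.1.1, p.2.1) ⟨trivial, trivial, hcase⟩
        exact ⟨g, Or.inl ⟨⟨hTinv g p.1 hp1, hTinv g p.2 hp2⟩, hg⟩⟩
      · push_neg at hcase
        have hcase2 : p.1.2 ≠ p.2.2 := fun h => hpne (Prod.ext hcase h)
        obtain ⟨g, hg⟩ := hK₂f (p.1.2, p.2.2) ⟨trivial, trivial, hcase2⟩
        exact ⟨g, Or.inr ⟨⟨hTinv g p.1 hp1, hTinv g p.2 hp2⟩, hg⟩⟩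

end Paper
end
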